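/- Define G : [1,∞) → ℝ by G(t) = (1 + ε sin(log t))/t with ε = 0.0001. Then G is nonincreasing on [1,∞), tends to 0 at infinity, G(1) ≤ 1, and t·G(t) does not converge as t → ∞ (its limsup is 1 + ε and its liminf is 1 - ε). -/

import Mathlib

open Real Filter Set

theorem stmt10 :
    let ε : ℝ := 0.0001
    let G : ℝ → ℝ := fun t => (1 + ε * Real.sin (Real.log t)) / t
    AntitoneOn G (Ici (1:ℝ)) ∧ Tendsto G atTop (nhds 0) ∧ G 1 ≤ 1 ∧
      (¬ ∃ L : ℝ, Tendsto (fun t => t * G t) atTop (nhds L)) ∧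
      Filter.limsup (fun t => t * G t) atTop = 1 + ε ∧
      Filter.liminf (fun t => t * G t) atTop = 1 - ε := by
  intro ε G
  have hε : ε = 0.0001 := rfl
  have hG : G = fun t => (1 + ε * Real.sin (Real.log t)) / t := rfl
  clear_value G
  clear_value ε
  have hε0 : (0:ℝ) ≤ ε := by rw [hε]; norm_num
  have hε1 : ε ≤ 1/2 := by rw [hε]; norm_num
  have hsb : ∀ y : ℝ, -ε ≤ ε * Real.sin y ∧ ε * Real.sin y ≤ ε := by
    intro y
    constructor
    · have := mul_le_mul_of_nonneg_left (Real.neg_one_le_sin y) hε0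
      linarith
    · have := mul_le_mul_of_nonneg_left (Real.sin_le_one y) hε0
      linarith
  -- eventual identification of t * G t
  have hid : ∀ t : ℝ, t ≠ 0 → t * G t = 1 + ε * Real.sin (Real.log t) := by
    intro t ht
    rw [hG]
    field_simp
  have hEq : ∀ᶠ t : ℝ in atTop, t * G t = 1 + ε * Real.sin (Real.log t) := by
    filter_upwards [eventually_gt_atTop (0:ℝ)] with t ht using hid t ht.ne'
  have hub : ∀ᶠ t : ℝ in atTop, t * G t ≤ 1 + ε := by
    filter_upwards [hEq] with t ht
    rw [ht]
    linarith [(hsb (Real.log t)).2]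
  have hlb : ∀ᶠ t : ℝ in atTop, 1 - ε ≤ t * G t := by
    filter_upwards [hEq] with t ht
    rw [ht]
    linarith [(hsb (Real.log t)).1]
  have hbdd_le : IsBoundedUnder (· ≤ ·) atTop (fun t : ℝ => t * G t) :=
    ⟨1 + ε, by simpa using hub⟩
  have hbdd_ge : IsBoundedUnder (· ≥ ·) atTop (fun t : ℝ => t * G t) :=
    ⟨1 - ε, by simpa using hlb⟩
  -- frequently attains 1 + ε
  have hfreq_hi : ∃ᶠ t : ℝ in atTop, 1 + ε ≤ t * G t := by
    rw [frequently_atTop]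
    intro b
    obtain ⟨n, hn⟩ := exists_nat_ge b
    set x : ℝ := Real.pi / 2 + (n : ℝ) * (2 * Real.pi) with hx
    have hpi := Real.pi_gt_three
    have hnn : (0:ℝ) ≤ (n : ℝ) := Nat.cast_nonneg n
    have hxb : b ≤ Real.exp x := by
      have h1 : b ≤ (n : ℝ) := hn
      have h2 : (n : ℝ) ≤ x := by rw [hx]; nlinarith
      have h3 : x + 1 ≤ Real.exp x := Real.add_one_le_exp x
      linarith
    refine ⟨Real.exp x, hxb, ?_⟩
    rw [hid _ (Real.exp_pos x).ne', Real.log_exp, hx,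
      Real.sin_add_nat_mul_two_pi, Real.sin_pi_div_two, mul_one]
  -- frequently attains 1 - ε
  have hfreq_lo : ∃ᶠ t : ℝ in atTop, t * G t ≤ 1 - ε := by
    rw [frequently_atTop]
    intro b
    obtain ⟨n, hn⟩ := exists_nat_ge b
    set x : ℝ := -(Real.pi / 2) + ((n : ℝ) + 1) * (2 * Real.pi) with hx
    have hpi := Real.pi_gt_three
    have hnn : (0:ℝ) ≤ (n : ℝ) := Nat.cast_nonneg n
    have hxb : b ≤ Real.exp x := by
      have h1 : b ≤ (n : ℝ) := hn
      have h2 : (n : ℝ) ≤ x := by rw [hx]; nlinarith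
      have h3 : x + 1 ≤ Real.exp x := Real.add_one_le_exp x
      linarith
    refine ⟨Real.exp x, hxb, ?_⟩
    have hxx : x = -(Real.pi / 2) + ((n : ℕ) + 1 : ℕ) * (2 * Real.pi) := by
      rw [hx]; push_cast; ring
    rw [hid _ (Real.exp_pos x).ne', Real.log_exp, hxx,
      Real.sin_add_nat_mul_two_pi, Real.sin_neg, Real.sin_pi_div_two, mul_neg_one]
    linarith
  have hlimsup : Filter.limsup (fun t : ℝ => t * G t) atTop = 1 + ε := by
    refine le_antisymm ?_ ?_
    · exact limsup_le_of_le (hbdd_ge.isCoboundedUnder_le) hub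
    · exact le_limsup_of_frequently_le hfreq_hi hbdd_le
  have hliminf : Filter.liminf (fun t : ℝ => t * G t) atTop = 1 - ε := by
    refine le_antisymm ?_ ?_
    · exact liminf_le_of_frequently_le hfreq_lo hbdd_ge
    · exact le_liminf_of_le (hbdd_le.isCoboundedUnder_ge) hlb
  -- antitone
  have hd : ∀ x : ℝ, 0 < x → HasDerivAt G
      ((ε * (Real.cos (Real.log x) * (1 / x)) * x - (1 + ε * Real.sin (Real.log x)) * 1) / x ^ 2) x := by
    intro x hx
    have hlog : HasDerivAt Real.log (1 / x) x := by
      simpa [one_div] using Real.hasDerivAt_log hx.ne'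
    have hsin : HasDerivAt (fun t : ℝ => Real.sin (Real.log t))
        (Real.cos (Real.log x) * (1 / x)) x := (Real.hasDerivAt_sin _).comp x hlog
    have hnum : HasDerivAt (fun t : ℝ => 1 + ε * Real.sin (Real.log t))
        (ε * (Real.cos (Real.log x) * (1 / x))) x := (hsin.const_mul ε).const_add 1
    rw [hG]
    simpa [Pi.div_def] using hnum.div (hasDerivAt_id x) hx.ne'
  have hanti : AntitoneOn G (Ici (1:ℝ)) := by
    have hcont : ContinuousOn G (Ici (1:ℝ)) := by
      rw [hG]
      apply ContinuousOn.div
      · exact continuousOn_const.add (continuousOn_const.mul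
          (Real.continuous_sin.comp_continuousOn (Real.continuousOn_log.mono
            (fun x hx => by
              simp only [mem_compl_iff, mem_singleton_iff]
              have : (1:ℝ) ≤ x := hx
              intro h; rw [h] at this; linarith))))
      · exact continuousOn_id
      · intro x hx
        have : (1:ℝ) ≤ x := hx
        linarith
    refine antitoneOn_of_deriv_nonpos (convex_Ici 1) hcont ?_ ?_
    · intro x hx
      rw [interior_Ici] at hx
      exact ((hd x (by linarith [mem_Ioi.mp hx])).differentiableAt).differentiableWithinAt
    · intro x hx
      rw [interior_Ici] at hx
      have hx0 : (0:ℝ) < x := by linarith [mem_Ioi.mp hx]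
      rw [(hd x hx0).deriv]
      have h1 : ε * (Real.cos (Real.log x) * (1 / x)) * x = ε * Real.cos (Real.log x) := by
        field_simp
      rw [h1]
      apply div_nonpos_of_nonpos_of_nonneg
      · have hc := mul_le_mul_of_nonneg_left (Real.cos_le_one (Real.log x)) hε0
        linarith [(hsb (Real.log x)).1]
      · positivity
  refine ⟨hanti, ?_, ?_, ?_, hlimsup, hliminf⟩
  · -- tendsto 0
    have hbound : ∀ᶠ t : ℝ in atTop, ‖G t‖ ≤ 2 / t := by
      filter_upwards [eventually_ge_atTop (1:ℝ)] with t ht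
      have ht0 : (0:ℝ) < t := by linarith
      have habs : |1 + ε * Real.sin (Real.log t)| ≤ 2 := by
        rw [abs_le]
        constructor
        · linarith [(hsb (Real.log t)).1]
        · linarith [(hsb (Real.log t)).2]
      rw [hG]
      simp only [norm_div, Real.norm_eq_abs, abs_of_pos ht0]
      gcongr
    have hlim : Tendsto (fun t : ℝ => 2 / t) atTop (nhds 0) :=
      tendsto_const_nhds.div_atTop tendsto_id
    exact squeeze_zero_norm' hbound hlim
  · -- G 1 ≤ 1
    rw [hG]
    simp
  · -- no limit
    rintro ⟨L, hL⟩
    have h1 := hL.limsup_eq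
    have h2 := hL.liminf_eq
    rw [hlimsup] at h1
    rw [hliminf] at h2
    rw [← h1] at h2
    rw [hε] at h2
    norm_num at h2
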